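/- The category FPCM of trace monoids and basic homomorphisms is isomorphic to the category ComRel whose objects are pairs (E₊, T) of a pointed set E₊ = E ⊔ {*} and a relation T ⊆ E₊ × E₊ that is reflexive, symmetric, and contains all pairs (a,*) and (*,a); morphisms of ComRel are pointed maps preserving the relation. -/

import Mathlib

open CategoryTheory

/-- The elementary commutation relation on words generated by an independence relation. -/
def traceRel (E : Type) (I : Set (E × E)) : FreeMonoid E → FreeMonoid E → Prop :=
  fun x y => ∃ a b : E, (a, b) ∈ I ∧ x = FreeMonoid.of a * FreeMonoid.of b ∧
    y = FreeMonoid.of b * FreeMonoid.of a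

/-- The congruence on the free monoid generated by commutation of independent pairs. -/
def traceCon (E : Type) (I : Set (E × E)) : Con (FreeMonoid E) := conGen (traceRel E I)

/-- The trace monoid `M(E,I)`. -/
abbrev TraceMonoid (E : Type) (I : Set (E × E)) : Type := (traceCon E I).Quotient

/-- The canonical projection from words to traces. -/
def trcMk {E : Type} {I : Set (E × E)} : FreeMonoid E →* TraceMonoid E I :=
  (traceCon E I).mk'

/-- The generator of the trace monoid corresponding to an event `e`. -/
def trc {E : Type} {I : Set (E × E)} (e : E) : TraceMonoid E I :=
  trcMk (FreeMonoid.of e)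

/-- `I` is an independence relation: irreflexive and symmetric. -/
structure IsIndep {E : Type} (I : Set (E × E)) : Prop where
  irrefl : ∀ a : E, (a, a) ∉ I
  symm : ∀ a b : E, (a, b) ∈ I → (b, a) ∈ I

/-- A homomorphism of trace monoids is basic if it sends generators to generators or to `1`. -/
def IsBasic {E E' : Type} {I : Set (E × E)} {I' : Set (E' × E')}
    (f : TraceMonoid E I →* TraceMonoid E' I') : Prop :=
  ∀ e : E, (∃ e' : E', f (trc e) = trc e') ∨ f (trc e) = 1

/-- A basic homomorphism preserves independence. -/
def IsIndepPres {E E' : Type} {I : Set (E × E)} {I' : Set (E' × E')}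
    (f : TraceMonoid E I →* TraceMonoid E' I') : Prop :=
  ∀ a b : E, (a, b) ∈ I → f (trc a) ≠ f (trc b) ∨ (f (trc a) = 1 ∧ f (trc b) = 1)

/-- The monoid homomorphism out of a trace monoid induced by a map on generators whose
images commute at independent pairs. -/
def liftHom {E : Type} {I : Set (E × E)} {N : Type*} [Monoid N] (φ : E → N)
    (hφ : ∀ a b : E, (a, b) ∈ I → φ a * φ b = φ b * φ a) : TraceMonoid E I →* N :=
  (traceCon E I).lift (FreeMonoid.lift φ) (by
    apply Con.conGen_le.2
    rintro x y ⟨a, b, hab, rfl, rfl⟩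
    rw [Con.ker_rel]
    simp only [map_mul, FreeMonoid.lift_eval_of]
    exact hφ a b hab)

@[simp] theorem liftHom_trc {E : Type} {I : Set (E × E)} {N : Type*} [Monoid N] (φ : E → N)
    (hφ : ∀ a b : E, (a, b) ∈ I → φ a * φ b = φ b * φ a) (e : E) :
    liftHom φ hφ (trc (I := I) e) = φ e := by
  show (traceCon E I).lift _ _ ((traceCon E I).mk' (FreeMonoid.of e)) = φ e
  exact FreeMonoid.lift_eval_of φ e

theorem trc_comm {E : Type} {I : Set (E × E)} {a b : E} (h : (a, b) ∈ I) :
    (trc a : TraceMonoid E I) * trc b = trc b * trc a := by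
  show trcMk (FreeMonoid.of a) * trcMk (FreeMonoid.of b) =
    trcMk (FreeMonoid.of b) * trcMk (FreeMonoid.of a)
  rw [← map_mul, ← map_mul]
  exact (Con.eq _).2 (ConGen.Rel.of _ _ ⟨a, b, h, rfl, rfl⟩)

theorem isBasic_id {E : Type} {I : Set (E × E)} :
    IsBasic (MonoidHom.id (TraceMonoid E I)) := fun e => Or.inl ⟨e, rfl⟩

theorem isBasic_comp {E₁ E₂ E₃ : Type} {I₁ : Set (E₁ × E₁)} {I₂ : Set (E₂ × E₂)}
    {I₃ : Set (E₃ × E₃)} {f : TraceMonoid E₁ I₁ →* TraceMonoid E₂ I₂}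
    {g : TraceMonoid E₂ I₂ →* TraceMonoid E₃ I₃} (hf : IsBasic f) (hg : IsBasic g) :
    IsBasic (g.comp f) := by
  intro e
  rcases hf e with ⟨e', he⟩ | he
  · rcases hg e' with ⟨e'', he''⟩ | he''
    · exact Or.inl ⟨e'', by simp [MonoidHom.comp_apply, he, he'']⟩
    · exact Or.inr (by simp [MonoidHom.comp_apply, he, he''])
  · exact Or.inr (by simp [MonoidHom.comp_apply, he])
/-- An object of the category `FPCM`: a set of events with an independence relation. -/
structure FPCMObj where
  E : Type
  I : Set (E × E)
  indep : IsIndep I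

/-- The category `FPCM` of trace monoids and basic homomorphisms. -/
instance : Category FPCMObj where
  Hom X Y := {f : TraceMonoid X.E X.I →* TraceMonoid Y.E Y.I // IsBasic f}
  id _ := ⟨MonoidHom.id _, isBasic_id⟩
  comp f g := ⟨g.1.comp f.1, isBasic_comp f.2 g.2⟩
  id_comp _ := Subtype.ext (MonoidHom.comp_id _)
  comp_id _ := Subtype.ext (MonoidHom.id_comp _)
  assoc _ _ _ := Subtype.ext rfl

/-- An object of the category `ComRel`: a pointed set `E ⊔ {*}` (modelled as `Option E` with
point `none`) together with a reflexive symmetric commutativity relation containing all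
pairs with the point. -/
structure ComRelObj where
  E : Type
  T : Set (Option E × Option E)
  refl : ∀ a : Option E, (a, a) ∈ T
  symm : ∀ a b : Option E, (a, b) ∈ T → (b, a) ∈ T
  star_left : ∀ a : Option E, ((none : Option E), a) ∈ T
  star_right : ∀ a : Option E, (a, (none : Option E)) ∈ T

/-- The category `ComRel` of pointed sets with commutativity relations and pointed
relation-preserving maps. -/
instance : Category ComRelObj where
  Hom X Y := {φ : Option X.E → Option Y.E //
    φ none = none ∧ ∀ a b : Option X.E, (a, b) ∈ X.T → (φ a, φ b) ∈ Y.T}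
  id _ := ⟨id, rfl, fun _ _ h => h⟩
  comp f g := ⟨g.1 ∘ f.1, by simp [f.2.1, g.2.1], fun a b h => g.2.2 _ _ (f.2.2 _ _ h)⟩
  id_comp _ := Subtype.ext rfl
  comp_id _ := Subtype.ext rfl
  assoc _ _ _ := Subtype.ext rfl

/-- The commutativity relation `T = I ∪ (E × {*}) ∪ ({*} × E) ∪ Δ` associated to an
independence relation `I`. -/
def comRelOf (X : FPCMObj) : ComRelObj where
  E := X.E
  T := {p | p.1 = p.2 ∨ p.1 = none ∨ p.2 = none ∨
        ∃ a b : X.E, (a, b) ∈ X.I ∧ p = (some a, some b)}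
  refl _ := Or.inl rfl
  symm a b h := by
    rcases h with h | h | h | ⟨x, y, hxy, h⟩
    · exact Or.inl h.symm
    · exact Or.inr (Or.inr (Or.inl h))
    · exact Or.inr (Or.inl h)
    · refine Or.inr (Or.inr (Or.inr ⟨y, x, X.indep.symm _ _ hxy, ?_⟩))
      obtain ⟨h1, h2⟩ := Prod.mk.injEq .. ▸ h
      simp_all
  star_left _ := Or.inr (Or.inl rfl)
  star_right _ := Or.inr (Or.inr (Or.inl rfl))

/-! ### Auxiliary machinery for the proof -/

section AuxProof

attribute [reducible] comRelOf

/-- Monoid homomorphism to multisets, recording the letters of a trace. -/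
def msHom {E : Type} {I : Set (E × E)} : TraceMonoid E I →* Multiplicative (Multiset E) :=
  liftHom (fun e => Multiplicative.ofAdd ({e} : Multiset E)) (fun _ _ _ => mul_comm _ _)

theorem trc_injective {E : Type} {I : Set (E × E)} {a b : E}
    (h : (trc a : TraceMonoid E I) = trc b) : a = b := by
  have := congrArg msHom h
  rw [msHom, liftHom_trc, liftHom_trc] at this
  simpa using this

theorem trc_ne_one {E : Type} {I : Set (E × E)} (e : E) : (trc e : TraceMonoid E I) ≠ 1 := by
  intro h
  have := congrArg msHom h
  rw [msHom, liftHom_trc, map_one] at this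
  simp at this

/-- Two homomorphisms out of a trace monoid agreeing on generators are equal. -/
theorem traceHom_ext {E : Type} {I : Set (E × E)} {N : Type*} [Monoid N]
    {f g : TraceMonoid E I →* N} (h : ∀ e, f (trc e) = g (trc e)) : f = g := by
  have hcomp : f.comp trcMk = g.comp trcMk := FreeMonoid.hom_eq h
  ext x
  exact h x

/-- If two generators commute in a trace monoid with independence relation, they are
equal or independent. -/
theorem comm_cases {E : Type} {I : Set (E × E)} (hI : IsIndep I) {a b : E}
    (h : (trc a : TraceMonoid E I) * trc b = trc b * trc a) : a = b ∨ (a, b) ∈ I := by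
  by_contra hcon
  push_neg at hcon
  obtain ⟨hne, hnI⟩ := hcon
  classical
  set φ : E → FreeMonoid Bool :=
    fun c => if c = a then FreeMonoid.of true else if c = b then FreeMonoid.of false else 1
    with hφ
  have hcomm : ∀ c d : E, (c, d) ∈ I → φ c * φ d = φ d * φ c := by
    intro c d hcd
    have hcd' : c ≠ d := fun hcdeq => hI.irrefl c (by rwa [← hcdeq] at hcd)
    by_cases hc : c = a
    · have hd1 : d ≠ a := fun hh => hcd' (hc.trans hh.symm)
      have hd2 : d ≠ b := fun hh => hnI (by rwa [hc, hh] at hcd)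
      simp [hφ, hd1, hd2]
    · by_cases hc2 : c = b
      · have hd1 : d ≠ a := fun hh => hnI (hI.symm _ _ (by rwa [hc2, hh] at hcd))
        have hd2 : d ≠ b := fun hh => hcd' (hc2.trans hh.symm)
        simp [hφ, hd1, hd2]
      · simp [hφ, hc, hc2]
  have h2 := congrArg (liftHom φ hcomm) h
  rw [map_mul, map_mul, liftHom_trc, liftHom_trc] at h2
  have hb1 : b ≠ a := fun hh => hne hh.symm
  simp only [hφ, if_pos rfl, if_neg hb1] at h2
  have h3 := congrArg FreeMonoid.toList h2
  simp [FreeMonoid.toList_of] at h3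

/-- The word (of length at most one) corresponding to an optional letter. -/
def wordOf {E : Type} : Option E → FreeMonoid E := fun o => o.elim 1 FreeMonoid.of

/-- The trace corresponding to an optional letter. -/
def optTrc {E : Type} {I : Set (E × E)} (o : Option E) : TraceMonoid E I := trcMk (wordOf o)

@[simp] theorem optTrc_some {E : Type} {I : Set (E × E)} (e : E) :
    (optTrc (some e) : TraceMonoid E I) = trc e := rfl

@[simp] theorem optTrc_none {E : Type} {I : Set (E × E)} :
    (optTrc none : TraceMonoid E I) = 1 := map_one trcMk

theorem optTrc_injective {E : Type} {I : Set (E × E)} {o o' : Option E}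
    (h : (optTrc o : TraceMonoid E I) = optTrc o') : o = o' := by
  cases o with
  | none => cases o' with
    | none => rfl
    | some e' => rw [optTrc_none, optTrc_some] at h; exact absurd h.symm (trc_ne_one e')
  | some e => cases o' with
    | none => rw [optTrc_none, optTrc_some] at h; exact absurd h (trc_ne_one e)
    | some e' => rw [optTrc_some, optTrc_some] at h; exact congrArg some (trc_injective h)

open Classical in
/-- The classification of a basic homomorphism on generators. -/
noncomputable def classMap {E E' : Type} {I : Set (E × E)} {I' : Set (E' × E')}
    (f : TraceMonoid E I →* TraceMonoid E' I') : E → Option E' :=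
  fun e => if h : ∃ e', f (trc e) = trc e' then some h.choose else none

theorem classMap_spec {E E' : Type} {I : Set (E × E)} {I' : Set (E' × E')}
    {f : TraceMonoid E I →* TraceMonoid E' I'} (hf : IsBasic f) (e : E) :
    f (trc e) = optTrc (classMap f e) := by
  rw [classMap]
  split
  · next h => rw [optTrc_some]; exact h.choose_spec
  · next h => rw [optTrc_none]; exact (hf e).resolve_left h

/-- The map part of the functor `F : FPCM ⥤ ComRel`. -/
noncomputable def fpcmToComRelMap {X Y : FPCMObj} (f : X ⟶ Y) : comRelOf X ⟶ comRelOf Y := by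
  refine ⟨fun o => o.bind (classMap f.1), rfl, ?_⟩
  rintro a b (h | h | h | ⟨x, y, hxy, hp⟩)
  · replace h : a = b := h
    exact Or.inl (congrArg (fun o => o.bind (classMap f.1)) h)
  · replace h : a = none := h
    exact Or.inr (Or.inl (by rw [h]; rfl))
  · replace h : b = none := h
    exact Or.inr (Or.inr (Or.inl (by rw [h]; rfl)))
  · obtain ⟨ha, hb⟩ := Prod.mk.injEq .. ▸ hp
    replace ha : a = some x := ha
    replace hb : b = some y := hb
    subst ha; subst hb
    have hcomm : f.1 (trc x) * f.1 (trc y) = f.1 (trc y) * f.1 (trc x) := by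
      rw [← map_mul, ← map_mul, trc_comm hxy]
    rw [classMap_spec f.2 x, classMap_spec f.2 y] at hcomm
    show _ ∈ (comRelOf Y).T
    cases hx : classMap f.1 x with
    | none => exact Or.inr (Or.inl (by simp [hx]))
    | some x' =>
      cases hy : classMap f.1 y with
      | none => exact Or.inr (Or.inr (Or.inl (by simp [hy])))
      | some y' =>
        rw [hx, hy, optTrc_some, optTrc_some] at hcomm
        rcases comm_cases Y.indep hcomm with heq | hind
        · exact Or.inl (by simp [hx, hy, heq])
        · exact Or.inr (Or.inr (Or.inr ⟨x', y', hind, by simp [hx, hy]⟩))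

/-- The functor `F : FPCM ⥤ ComRel`. -/
noncomputable def fpcmToComRel : FPCMObj ⥤ ComRelObj where
  obj := comRelOf
  map := fpcmToComRelMap
  map_id X := by
    apply Subtype.ext
    funext o
    cases o with
    | none => rfl
    | some e =>
      show classMap (MonoidHom.id _) e = some e
      apply optTrc_injective
      rw [← classMap_spec isBasic_id e, optTrc_some]
      rfl
  map_comp {X Y Z} f g := by
    apply Subtype.ext
    funext o
    cases o with
    | none => rfl
    | some e =>
      show classMap (g.1.comp f.1) e = (classMap f.1 e).bind (classMap g.1)
      apply optTrc_injective
      rw [← classMap_spec (isBasic_comp f.2 g.2) e]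
      show g.1 (f.1 (trc e)) = _
      rw [classMap_spec f.2 e]
      cases hx : classMap f.1 e with
      | none => simp
      | some e' =>
        rw [optTrc_some]
        exact classMap_spec g.2 e'

/-- The object part of the functor `G : ComRel ⥤ FPCM`. -/
@[reducible] def comRelToFpcmObj (Y : ComRelObj) : FPCMObj where
  E := Y.E
  I := {p | (some p.1, some p.2) ∈ Y.T ∧ p.1 ≠ p.2}
  indep := ⟨fun _ h => h.2 rfl, fun _ _ h => ⟨Y.symm _ _ h.1, h.2.symm⟩⟩

theorem comRelMapComm {X Y : ComRelObj} (φ : X ⟶ Y) :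
    ∀ a b : X.E, (a, b) ∈ (comRelToFpcmObj X).I →
      (optTrc (φ.1 (some a)) : TraceMonoid Y.E (comRelToFpcmObj Y).I) * optTrc (φ.1 (some b)) =
      optTrc (φ.1 (some b)) * optTrc (φ.1 (some a)) := by
  intro a b hab
  have h2 := φ.2.2 _ _ hab.1
  cases ha : φ.1 (some a) with
  | none => rw [optTrc_none, one_mul, mul_one]
  | some a' =>
    cases hb : φ.1 (some b) with
    | none => rw [optTrc_none, mul_one, one_mul]
    | some b' =>
      rw [ha, hb] at h2
      rw [optTrc_some, optTrc_some]
      by_cases hab' : a' = b'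
      · rw [hab']
      · exact trc_comm (I := (comRelToFpcmObj Y).I) ⟨h2, hab'⟩

/-- The map part of the functor `G : ComRel ⥤ FPCM`. -/
noncomputable def comRelToFpcmMap {X Y : ComRelObj} (φ : X ⟶ Y) :
    comRelToFpcmObj X ⟶ comRelToFpcmObj Y :=
  ⟨liftHom (fun e => optTrc (φ.1 (some e))) (comRelMapComm φ), by
    intro e
    rw [liftHom_trc]
    cases φ.1 (some e) with
    | none => exact Or.inr optTrc_none
    | some e' => exact Or.inl ⟨e', optTrc_some e'⟩⟩

theorem comRelToFpcmMap_trc {X Y : ComRelObj} (φ : X ⟶ Y) (e : X.E) :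
    (comRelToFpcmMap φ).1 (trc e) = optTrc (φ.1 (some e)) :=
  liftHom_trc (fun e => optTrc (φ.1 (some e))) (comRelMapComm φ) e

/-- The functor `G : ComRel ⥤ FPCM`. -/
noncomputable def comRelToFpcm : ComRelObj ⥤ FPCMObj where
  obj := comRelToFpcmObj
  map := comRelToFpcmMap
  map_id X := by
    apply Subtype.ext
    apply traceHom_ext
    intro e
    rw [comRelToFpcmMap_trc]
    rfl
  map_comp {X Y Z} φ ψ := by
    apply Subtype.ext
    apply traceHom_ext
    intro e
    have hR : ((comRelToFpcmMap φ ≫ comRelToFpcmMap ψ) :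
        comRelToFpcmObj X ⟶ comRelToFpcmObj Z).1 (trc e) =
        (comRelToFpcmMap ψ).1 ((comRelToFpcmMap φ).1 (trc e)) := rfl
    rw [hR, comRelToFpcmMap_trc, comRelToFpcmMap_trc]
    show optTrc (ψ.1 (φ.1 (some e))) = _
    cases φ.1 (some e) with
    | none => rw [optTrc_none, map_one, ψ.2.1, optTrc_none]
    | some e' => rw [optTrc_some, comRelToFpcmMap_trc]

theorem fpcmObjExt {E : Type} {I I' : Set (E × E)} {h : IsIndep I} {h' : IsIndep I'}
    (hII : I = I') : (⟨E, I, h⟩ : FPCMObj) = ⟨E, I', h'⟩ := by subst hII; rfl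

theorem comRelObjExt {E : Type} {T T' : Set (Option E × Option E)}
    {r : _} {s : _} {sl : _} {sr : _} {r' : _} {s' : _} {sl' : _} {sr' : _}
    (hTT : T = T') :
    (⟨E, T, r, s, sl, sr⟩ : ComRelObj) = ⟨E, T', r', s', sl', sr'⟩ := by subst hTT; rfl

theorem roundtrip_I {E : Type} {I : Set (E × E)} (hI : IsIndep I) :
    (comRelToFpcmObj (comRelOf ⟨E, I, hI⟩)).I = I := by
  ext ⟨a, b⟩
  constructor
  · rintro ⟨h1 | h1 | h1 | ⟨x, y, hxy, hp⟩, hne⟩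
    · exact absurd (Option.some_injective _ h1) hne
    · exact absurd h1 (by simp)
    · exact absurd h1 (by simp)
    · obtain ⟨hx, hy⟩ := Prod.mk.injEq .. ▸ hp
      obtain rfl := Option.some_injective _ hx
      obtain rfl := Option.some_injective _ hy
      exact hxy
  · intro h
    refine ⟨Or.inr (Or.inr (Or.inr ⟨a, b, h, rfl⟩)), fun hab => hI.irrefl b ?_⟩
    replace hab : a = b := hab
    rwa [hab] at h

theorem roundtrip_T {E : Type} (T : Set (Option E × Option E)) (r s sl sr) :
    (comRelOf (comRelToFpcmObj ⟨E, T, r, s, sl, sr⟩)).T = T := by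
  ext ⟨a, b⟩
  constructor
  · rintro (h | h | h | ⟨x, y, ⟨hT, _⟩, hp⟩)
    · replace h : a = b := h; rw [h]; exact r b
    · replace h : a = none := h; rw [h]; exact sl b
    · replace h : b = none := h; rw [h]; exact sr a
    · obtain ⟨hx, hy⟩ := Prod.mk.injEq .. ▸ hp
      replace hx : a = some x := hx
      replace hy : b = some y := hy
      rw [hx, hy]; exact hT
  · intro h
    cases a with
    | none => exact Or.inr (Or.inl rfl)
    | some x =>
      cases b with
      | none => exact Or.inr (Or.inr (Or.inl rfl))
      | some y =>
        by_cases hxy : x = y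
        · exact Or.inl (by rw [hxy])
        · exact Or.inr (Or.inr (Or.inr ⟨x, y, ⟨h, hxy⟩, rfl⟩))

theorem fpcmHomHeq {E F : Type} {I₁ I₂ : Set (E × E)} {J₁ J₂ : Set (F × F)}
    (hI : I₁ = I₂) (hJ : J₁ = J₂)
    {hi₁ : IsIndep I₁} {hi₂ : IsIndep I₂} {hj₁ : IsIndep J₁} {hj₂ : IsIndep J₂}
    (f : (⟨E, I₁, hi₁⟩ : FPCMObj) ⟶ ⟨F, J₁, hj₁⟩)
    (g : (⟨E, I₂, hi₂⟩ : FPCMObj) ⟶ ⟨F, J₂, hj₂⟩)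
    (h : ∀ e : E, ∃ w : FreeMonoid F, f.1 (trc e) = trcMk w ∧ g.1 (trc e) = trcMk w) :
    HEq f g := by
  subst hI; subst hJ
  apply heq_of_eq
  apply Subtype.ext
  apply traceHom_ext
  intro e
  obtain ⟨w, h1, h2⟩ := h e
  rw [h1, h2]

theorem comRelHomHeq {E F : Type} {T₁ T₂ : Set (Option E × Option E)}
    {S₁ S₂ : Set (Option F × Option F)} (hT : T₁ = T₂) (hS : S₁ = S₂)
    {a₁ : _} {a₂ : _} {a₃ : _} {a₄ : _} {b₁ : _} {b₂ : _} {b₃ : _} {b₄ : _}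
    {c₁ : _} {c₂ : _} {c₃ : _} {c₄ : _} {d₁ : _} {d₂ : _} {d₃ : _} {d₄ : _}
    (φ : (⟨E, T₁, a₁, a₂, a₃, a₄⟩ : ComRelObj) ⟶ ⟨F, S₁, b₁, b₂, b₃, b₄⟩)
    (ψ : (⟨E, T₂, c₁, c₂, c₃, c₄⟩ : ComRelObj) ⟶ ⟨F, S₂, d₁, d₂, d₃, d₄⟩)
    (h : φ.1 = ψ.1) : HEq φ ψ := by
  subst hT; subst hS
  exact heq_of_eq (Subtype.ext h)

theorem fpcm_comp_eq : fpcmToComRel ⋙ comRelToFpcm = 𝟭 FPCMObj := by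
  apply Functor.hext
  · rintro ⟨E, I, hI⟩
    exact fpcmObjExt (roundtrip_I hI)
  · rintro ⟨E, I, hI⟩ ⟨F, J, hJ⟩ f
    refine fpcmHomHeq (roundtrip_I hI) (roundtrip_I hJ) _ f ?_
    intro e
    refine ⟨wordOf (classMap f.1 e), ?_, classMap_spec f.2 e⟩
    show (comRelToFpcmMap (fpcmToComRelMap f)).1 (trc e) = _
    rw [comRelToFpcmMap_trc]
    rfl

theorem comRel_comp_eq : comRelToFpcm ⋙ fpcmToComRel = 𝟭 ComRelObj := by
  apply Functor.hext
  · rintro ⟨E, T, r, s, sl, sr⟩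
    exact comRelObjExt (roundtrip_T T r s sl sr)
  · rintro ⟨E, T, r, s, sl, sr⟩ ⟨F, S, r', s', sl', sr'⟩ φ
    refine comRelHomHeq (roundtrip_T T r s sl sr) (roundtrip_T S r' s' sl' sr') _ φ ?_
    show (fpcmToComRelMap (comRelToFpcmMap φ)).1 = φ.1
    funext o
    cases o with
    | none => exact φ.2.1.symm
    | some e =>
      show classMap (comRelToFpcmMap φ).1 e = φ.1 (some e)
      apply optTrc_injective
      rw [← classMap_spec (comRelToFpcmMap φ).2 e, comRelToFpcmMap_trc]

end AuxProof

/-- The category `FPCM` of trace monoids and basic homomorphisms is isomorphic to the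
category `ComRel` of pointed sets with commutativity relations; the isomorphism sends
`M(E,I)` to `(E ⊔ {*}, I ∪ (E × {*}) ∪ ({*} × E) ∪ Δ)`. -/
theorem fpcm_iso_comRel :
    ∃ (F : FPCMObj ⥤ ComRelObj) (G : ComRelObj ⥤ FPCMObj),
      F.obj = comRelOf ∧ F ⋙ G = 𝟭 FPCMObj ∧ G ⋙ F = 𝟭 ComRelObj := by
  exact ⟨fpcmToComRel, comRelToFpcm, rfl, fpcm_comp_eq, comRel_comp_eq⟩
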